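/- Let H be a cocommutative bialgebra over a commutative ring R, F a Drinfel'd twist on H, Δ_F(x) := F · Δ(x) · F⁻¹ the twisted coproduct, and ℛ := F₂₁ · F⁻¹ = Σ_k R^k ⊗ R_k the associated R-matrix. Then (id ⊗ Δ_F)(ℛ) = ℛ₁₃ · ℛ₁₂ in H ⊗ H ⊗ H, where ℛ₁₃ := Σ_k R^k ⊗ 1 ⊗ R_k and ℛ₁₂ := ℛ ⊗ 1. -/

import Mathlib

open scoped TensorProduct

noncomputable section

/-- `Δ ⊗ id` as an algebra homomorphism `H ⊗ H → (H ⊗ H) ⊗ H`. -/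
def comulTensorId (R H : Type*) [CommRing R] [Ring H] [Bialgebra R H] :
    (H ⊗[R] H) →ₐ[R] (H ⊗[R] H) ⊗[R] H :=
  Algebra.TensorProduct.map (Bialgebra.comulAlgHom R H) (AlgHom.id R H)

/-- `id ⊗ Δ` as an algebra homomorphism `H ⊗ H → H ⊗ (H ⊗ H)`. -/
def idTensorComul (R H : Type*) [CommRing R] [Ring H] [Bialgebra R H] :
    (H ⊗[R] H) →ₐ[R] H ⊗[R] (H ⊗[R] H) :=
  Algebra.TensorProduct.map (AlgHom.id R H) (Bialgebra.comulAlgHom R H)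

/-- `F` is a Drinfel'd twist on the bialgebra `H` with two-sided inverse `Finv`:
it is invertible and satisfies the 2-cocycle condition
`(F ⊗ 1) · (Δ ⊗ id)(F) = (1 ⊗ F) · (id ⊗ Δ)(F)` in `H ⊗ H ⊗ H`. -/
def IsDrinfeldTwist (R : Type*) {H : Type*} [CommRing R] [Ring H] [Bialgebra R H]
    (F Finv : H ⊗[R] H) : Prop :=
  F * Finv = 1 ∧ Finv * F = 1 ∧
    (TensorProduct.assoc R H H H) ((F ⊗ₜ[R] (1 : H)) * comulTensorId R H F) =
      ((1 : H) ⊗ₜ[R] F) * idTensorComul R H F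

/-- The `R`-matrix `ℛ := F₂₁ · F⁻¹` associated to a Drinfel'd twist, where
`F₂₁ = τ(F)` and `τ` is the flip of `H ⊗ H`. -/
def Rmat (R : Type*) {H : Type*} [CommRing R] [Ring H] [Bialgebra R H]
    (F Finv : H ⊗[R] H) : H ⊗[R] H :=
  (Algebra.TensorProduct.comm R H H) F * Finv

/-- The bialgebra `H` is cocommutative: `τ ∘ Δ = Δ`. -/
def IsCocommutative (R : Type*) (H : Type*) [CommRing R] [Ring H] [Bialgebra R H] : Prop :=
  ∀ x : H, (Algebra.TensorProduct.comm R H H) (Coalgebra.comul (R := R) x) =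
    Coalgebra.comul (R := R) x

/-- The twisted coproduct `Δ_F(x) := F · Δ(x) · F⁻¹`, as an `R`-linear map. -/
def comulF (R : Type*) {H : Type*} [CommRing R] [Ring H] [Bialgebra R H]
    (F Finv : H ⊗[R] H) : H →ₗ[R] H ⊗[R] H :=
  (LinearMap.mulLeft R F).comp
    ((LinearMap.mulRight R Finv).comp (Coalgebra.comul (R := R)))

namespace RmatAux

variable (R H : Type*) [CommRing R] [Ring H] [Bialgebra R H]

/-- The flip of `H ⊗ H` as an algebra equivalence. -/
def flip : H ⊗[R] H ≃ₐ[R] H ⊗[R] H := Algebra.TensorProduct.comm R H H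

/-- Associator as an algebra equivalence. -/
def aT : (H ⊗[R] H) ⊗[R] H ≃ₐ[R] H ⊗[R] (H ⊗[R] H) := Algebra.TensorProduct.assoc R R R H H H

/-- `a ⊗ b ↦ a ⊗ (1 ⊗ b)` (legs 1 and 3). -/
def j13 : H ⊗[R] H →ₐ[R] H ⊗[R] (H ⊗[R] H) :=
  Algebra.TensorProduct.map (AlgHom.id R H) Algebra.TensorProduct.includeRight

/-- `a ⊗ b ↦ a ⊗ (b ⊗ 1)` (legs 1 and 2). -/
def j12 : H ⊗[R] H →ₐ[R] H ⊗[R] (H ⊗[R] H) :=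
  Algebra.TensorProduct.map (AlgHom.id R H) Algebra.TensorProduct.includeLeft

/-- `z ↦ 1 ⊗ z` (legs 2 and 3). -/
def e23 : H ⊗[R] H →ₐ[R] H ⊗[R] (H ⊗[R] H) := Algebra.TensorProduct.includeRight

/-- `a ⊗ b ↦ Δ a ⊗ b`, landing in `H ⊗ (H ⊗ H)`. -/
def D12 : H ⊗[R] H →ₐ[R] H ⊗[R] (H ⊗[R] H) := (aT R H).toAlgHom.comp (comulTensorId R H)

/-- `(x ⊗ y) ⊗ z ↦ z ⊗ (x ⊗ y)`. -/
def P3 : (H ⊗[R] H) ⊗[R] H ≃ₐ[R] H ⊗[R] (H ⊗[R] H) := Algebra.TensorProduct.comm R (H ⊗[R] H) H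

/-- `(x ⊗ y) ⊗ z ↦ (y ⊗ x) ⊗ z`. -/
def s12 : (H ⊗[R] H) ⊗[R] H ≃ₐ[R] (H ⊗[R] H) ⊗[R] H :=
  Algebra.TensorProduct.congr (Algebra.TensorProduct.comm R H H) (AlgEquiv.refl (R := R) (A₁ := H))

/-- Cyclic permutation `x ⊗ (y ⊗ z) ↦ z ⊗ (x ⊗ y)`. -/
def Q1 : H ⊗[R] (H ⊗[R] H) ≃ₐ[R] H ⊗[R] (H ⊗[R] H) := (aT R H).symm.trans (P3 R H)

/-- Transposition `x ⊗ (y ⊗ z) ↦ y ⊗ (x ⊗ z)`. -/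
def Q2 : H ⊗[R] (H ⊗[R] H) ≃ₐ[R] H ⊗[R] (H ⊗[R] H) :=
  (aT R H).symm.trans ((s12 R H).trans (aT R H))

variable {R H}

lemma assoc_eq_aT (x : (H ⊗[R] H) ⊗[R] H) :
    (TensorProduct.assoc R H H H) x = aT R H x := rfl

lemma aT_symm_tmul (a b c : H) :
    (aT R H).symm (a ⊗ₜ[R] (b ⊗ₜ[R] c)) = (a ⊗ₜ[R] b) ⊗ₜ[R] c := by
  rw [AlgEquiv.symm_apply_eq]; exact (Algebra.TensorProduct.assoc_tmul (R := R) (S := R) (T := R) (a := a) (b := b) (c := c)).symm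

lemma comulTensorId_tmul (a b : H) :
    comulTensorId R H (a ⊗ₜ[R] b) = (Coalgebra.comul (R := R) a) ⊗ₜ[R] b := by
  simp [comulTensorId]

lemma idTensorComul_tmul (a b : H) :
    idTensorComul R H (a ⊗ₜ[R] b) = a ⊗ₜ[R] (Coalgebra.comul (R := R) b) := by
  simp [idTensorComul]

lemma j13_tmul (a b : H) : j13 R H (a ⊗ₜ[R] b) = a ⊗ₜ[R] ((1 : H) ⊗ₜ[R] b) := by
  simp [j13]

lemma j12_tmul (a b : H) : j12 R H (a ⊗ₜ[R] b) = a ⊗ₜ[R] (b ⊗ₜ[R] (1 : H)) := by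
  simp [j12]

lemma e23_apply (z : H ⊗[R] H) : e23 R H z = (1 : H) ⊗ₜ[R] z := rfl

lemma s12_tmul (z : H ⊗[R] H) (c : H) :
    s12 R H (z ⊗ₜ[R] c) = (Algebra.TensorProduct.comm R H H z) ⊗ₜ[R] c := by
  simp [s12, Algebra.TensorProduct.congr_apply]

lemma P3_tmul (z : H ⊗[R] H) (c : H) : P3 R H (z ⊗ₜ[R] c) = c ⊗ₜ[R] z :=
  Algebra.TensorProduct.comm_tmul R z c

lemma Q1_tmul (a b c : H) : Q1 R H (a ⊗ₜ[R] (b ⊗ₜ[R] c)) = c ⊗ₜ[R] (a ⊗ₜ[R] b) := by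
  simp [Q1, aT_symm_tmul, P3, Algebra.TensorProduct.comm_tmul]

lemma Q2_tmul (a b c : H) : Q2 R H (a ⊗ₜ[R] (b ⊗ₜ[R] c)) = b ⊗ₜ[R] (a ⊗ₜ[R] c) := by
  simp [Q2, aT_symm_tmul, s12_tmul, aT, Algebra.TensorProduct.comm_tmul,
    Algebra.TensorProduct.assoc_tmul]

/-- `Q1 (1 ⊗ z) = j13 (flip z)`. -/
lemma Q1_one_tmul (z : H ⊗[R] H) :
    Q1 R H ((1 : H) ⊗ₜ[R] z) = j13 R H (Algebra.TensorProduct.comm R H H z) := by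
  induction z using TensorProduct.induction_on with
  | zero => simp
  | tmul x y => rw [Q1_tmul, Algebra.TensorProduct.comm_tmul, j13_tmul]
  | add x y hx hy => rw [TensorProduct.tmul_add, map_add, map_add, hx, hy, map_add]

/-- `Q2 (1 ⊗ z) = j13 z`. -/
lemma Q2_one_tmul (z : H ⊗[R] H) :
    Q2 R H ((1 : H) ⊗ₜ[R] z) = j13 R H z := by
  induction z using TensorProduct.induction_on with
  | zero => simp
  | tmul x y => rw [Q2_tmul, j13_tmul]
  | add x y hx hy => rw [TensorProduct.tmul_add, map_add, hx, hy, map_add]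

/-- `aT (z ⊗ 1) = j12 z`. -/
lemma aT_tmul_one (z : H ⊗[R] H) :
    aT R H (z ⊗ₜ[R] (1 : H)) = j12 R H z := by
  induction z using TensorProduct.induction_on with
  | zero => simp
  | tmul x y => rw [j12_tmul]; exact Algebra.TensorProduct.assoc_tmul (R := R) (S := R) (T := R) (a := x) (b := y) (c := 1)
  | add x y hx hy => rw [TensorProduct.add_tmul, map_add, hx, hy, map_add]

/-- `P3 (comulTensorId z) = idTensorComul (flip z)`. -/
lemma P3_comulTensorId (z : H ⊗[R] H) :
    P3 R H (comulTensorId R H z) =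
      idTensorComul R H (Algebra.TensorProduct.comm R H H z) := by
  induction z using TensorProduct.induction_on with
  | zero => simp
  | tmul a b =>
      rw [comulTensorId_tmul, Algebra.TensorProduct.comm_tmul, idTensorComul_tmul]
      exact Algebra.TensorProduct.comm_tmul R _ b
  | add x y hx hy => rw [map_add, map_add, hx, hy, map_add, map_add]

/-- Using cocommutativity: `aT (s12 (comulTensorId z)) = D12 z`. -/
lemma aT_s12_comulTensorId (hcc : IsCocommutative R H) (z : H ⊗[R] H) :
    aT R H (s12 R H (comulTensorId R H z)) = D12 R H z := by
  induction z using TensorProduct.induction_on with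
  | zero => simp
  | tmul a b =>
      rw [comulTensorId_tmul, s12_tmul, hcc a]
      rfl
  | add x y hx hy => rw [map_add, map_add, map_add, hx, hy, map_add]

/-- Using cocommutativity: `Q1 (idTensorComul z) = Q2 (idTensorComul z)`. -/
lemma Q1_eq_Q2_idTensorComul (hcc : IsCocommutative R H) (z : H ⊗[R] H) :
    Q1 R H (idTensorComul R H z) = Q2 R H (idTensorComul R H z) := by
  induction z using TensorProduct.induction_on with
  | zero => simp
  | tmul a b =>
      rw [idTensorComul_tmul]
      conv_lhs => rw [← hcc b]
      generalize Coalgebra.comul (R := R) b = w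
      induction w using TensorProduct.induction_on with
      | zero => simp
      | tmul x y =>
          rw [Algebra.TensorProduct.comm_tmul, Q1_tmul, Q2_tmul]
      | add u v hu hv =>
          rw [map_add, TensorProduct.tmul_add, TensorProduct.tmul_add, map_add, map_add,
            hu, hv]
  | add x y hx hy => rw [map_add, map_add, map_add, hx, hy]

end RmatAux

open RmatAux

set_option maxHeartbeats 1600000 in
/-- For a Drinfel'd twist `F` on a cocommutative bialgebra `H`, the
`R`-matrix `ℛ = F₂₁ · F⁻¹` satisfies `(id ⊗ Δ_F)(ℛ) = ℛ₁₃ · ℛ₁₂` in `H ⊗ H ⊗ H`. -/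
theorem Rmatrix_id_tensor_comulF
    (R : Type*) [CommRing R] (H : Type*) [Ring H] [Bialgebra R H]
    (hcc : IsCocommutative R H)
    (F Finv : H ⊗[R] H) (hF : IsDrinfeldTwist R F Finv) :
    (TensorProduct.map LinearMap.id (comulF R F Finv)) (Rmat R F Finv) =
      ((Algebra.TensorProduct.map (AlgHom.id R H) Algebra.TensorProduct.includeRight)
          (Rmat R F Finv)) *
        ((Algebra.TensorProduct.map (AlgHom.id R H) Algebra.TensorProduct.includeLeft)
          (Rmat R F Finv)) := by
  obtain ⟨hFF, hFiF, hC0⟩ := hF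
  rw [assoc_eq_aT] at hC0
  set τF : H ⊗[R] H := Algebra.TensorProduct.comm R H H F with hτF
  -- Step 0: twisted coproduct on the second leg, elementwise.
  have hA : ∀ z : H ⊗[R] H,
      (TensorProduct.map LinearMap.id (comulF R F Finv)) z =
        e23 R H F * idTensorComul R H z * e23 R H Finv := by
    intro z
    induction z using TensorProduct.induction_on with
    | zero => simp
    | tmul a b =>
        rw [TensorProduct.map_tmul, idTensorComul_tmul, e23_apply, e23_apply,
          Algebra.TensorProduct.tmul_mul_tmul, Algebra.TensorProduct.tmul_mul_tmul]
        simp [comulF, mul_assoc]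
    | add x y hx hy =>
        rw [map_add, map_add, hx, hy, mul_add, add_mul]
  -- The cocycle condition, in the space `H ⊗ (H ⊗ H)`.
  have hC : j12 R H F * D12 R H F = e23 R H F * idTensorComul R H F := by
    have h1 := hC0
    rw [map_mul, aT_tmul_one] at h1
    exact h1
  -- The cocycle condition in its original space, solved for the left side.
  have hCsymm : (F ⊗ₜ[R] (1 : H)) * comulTensorId R H F =
      (aT R H).symm (((1 : H) ⊗ₜ[R] F) * idTensorComul R H F) := by
    rw [← hC0, AlgEquiv.symm_apply_apply]
  -- Identity (I): apply the cyclic permutation P3 to the cocycle.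
  have hI : e23 R H F * idTensorComul R H τF =
      j13 R H τF * Q1 R H (idTensorComul R H F) := by
    have h := congrArg (P3 R H) hCsymm
    rw [map_mul, P3_tmul, P3_comulTensorId] at h
    have h2 : P3 R H ((aT R H).symm (((1 : H) ⊗ₜ[R] F) * idTensorComul R H F)) =
        Q1 R H (((1 : H) ⊗ₜ[R] F) * idTensorComul R H F) := rfl
    rw [h2, map_mul, Q1_one_tmul] at h
    rw [e23_apply]
    exact h
  -- Identity (II): apply `aT ∘ s12` to the cocycle, using cocommutativity.
  have hQ2def : ∀ w : H ⊗[R] (H ⊗[R] H),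
      aT R H (s12 R H ((aT R H).symm w)) = Q2 R H w := fun _ => rfl
  have hII : j12 R H τF * D12 R H F =
      j13 R H F * Q2 R H (idTensorComul R H F) := by
    have h : aT R H (s12 R H ((F ⊗ₜ[R] (1 : H)) * comulTensorId R H F)) =
        aT R H (s12 R H ((aT R H).symm
          (((1 : H) ⊗ₜ[R] F) * idTensorComul R H F))) := by rw [← hCsymm]
    rw [hQ2def, map_mul, map_mul, map_mul, s12_tmul, aT_tmul_one,
      aT_s12_comulTensorId hcc, Q2_one_tmul] at h
    exact h
  -- inverse of the cocycle identity
  have hD23inv : idTensorComul R H Finv * e23 R H Finv =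
      D12 R H Finv * j12 R H Finv := by
    refine (left_inv_eq_right_inv (a := e23 R H F * idTensorComul R H F)
      ?_ ?_).symm
    · rw [← hC, mul_assoc, ← mul_assoc (j12 R H Finv), ← map_mul, hFiF, map_one,
        one_mul, ← map_mul, hFiF, map_one]
    · rw [mul_assoc, ← mul_assoc (idTensorComul R H F), ← map_mul, hFF, map_one,
        one_mul, ← map_mul, hFF, map_one]
  -- rearranged identity (II)
  have hII' : Q2 R H (idTensorComul R H F) * D12 R H Finv =
      j13 R H Finv * j12 R H τF := by
    calc Q2 R H (idTensorComul R H F) * D12 R H Finv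
        = (j13 R H Finv * j13 R H F) * Q2 R H (idTensorComul R H F) *
            D12 R H Finv := by rw [← map_mul, hFiF, map_one, one_mul]
      _ = j13 R H Finv * (j13 R H F * Q2 R H (idTensorComul R H F)) *
            D12 R H Finv := by rw [mul_assoc (j13 R H Finv)]
      _ = j13 R H Finv * (j12 R H τF * D12 R H F) * D12 R H Finv := by
            rw [← hII]
      _ = j13 R H Finv * j12 R H τF * (D12 R H F * D12 R H Finv) := by
            rw [← mul_assoc (j13 R H Finv) (j12 R H τF) (D12 R H F),
              mul_assoc (j13 R H Finv * j12 R H τF)]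
      _ = j13 R H Finv * j12 R H τF := by
            rw [← map_mul, hFF, map_one, mul_one]
  -- final assembly
  have hRm : Rmat R F Finv = τF * Finv := rfl
  show _ = j13 R H (Rmat R F Finv) * j12 R H (Rmat R F Finv)
  rw [hA (Rmat R F Finv), hRm, map_mul]
  calc e23 R H F * (idTensorComul R H τF * idTensorComul R H Finv) * e23 R H Finv
      = (e23 R H F * idTensorComul R H τF) *
          (idTensorComul R H Finv * e23 R H Finv) := by
          rw [← mul_assoc (e23 R H F), mul_assoc (e23 R H F * idTensorComul R H τF)]
    _ = (j13 R H τF * Q1 R H (idTensorComul R H F)) *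
          (D12 R H Finv * j12 R H Finv) := by rw [hI, hD23inv]
    _ = (j13 R H τF * Q2 R H (idTensorComul R H F)) *
          (D12 R H Finv * j12 R H Finv) := by
          rw [Q1_eq_Q2_idTensorComul hcc]
    _ = j13 R H τF * (Q2 R H (idTensorComul R H F) * D12 R H Finv) *
          j12 R H Finv := by
          rw [mul_assoc (j13 R H τF) (Q2 R H (idTensorComul R H F)),
            ← mul_assoc (Q2 R H (idTensorComul R H F)) (D12 R H Finv) (j12 R H Finv),
            ← mul_assoc (j13 R H τF)]
    _ = j13 R H τF * (j13 R H Finv * j12 R H τF) * j12 R H Finv := by rw [hII']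
    _ = (j13 R H τF * j13 R H Finv) * (j12 R H τF * j12 R H Finv) := by
          rw [← mul_assoc (j13 R H τF) (j13 R H Finv) (j12 R H τF),
            mul_assoc (j13 R H τF * j13 R H Finv)]
    _ = j13 R H (τF * Finv) * j12 R H (τF * Finv) := by
          rw [map_mul, map_mul]
    _ = j13 R H (Rmat R F Finv) * j12 R H (Rmat R F Finv) := by rw [hRm]
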